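/- arXiv:1511.08403 — 3 statements merged into one kernel-verified Lean document; each statement's English description precedes it below -/
import Mathlib

section
/- If G is a minimal forbidden induced subgraph for Υ_k, then Δ(G) = χ(G) + k. -/
open SimpleGraph

attribute [local instance] Classical.propDecidable

set_option linter.unnecessarySeqFocus false

/-- `G ∈ Υ_k`: every nonempty induced subgraph `H` satisfies `Δ(H) + 1 ≤ χ(H) + k`,
i.e. `Δ(H) ≤ χ(H) + k - 1`. -/
def UpsilonMem (k : ℕ) {V : Type*} [Fintype V] (G : SimpleGraph V) : Prop :=
  ∀ s : Finset V, s.Nonempty →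
    ((G.induce (s : Set V)).maxDegree + 1 : ℕ∞) ≤
      (G.induce (s : Set V)).chromaticNumber + (k : ℕ∞)

/-- `G ∈ Ω_k`: every nonempty induced subgraph `H` satisfies `Δ(H) + 1 ≤ ω(H) + k`. -/
def OmegaMem (k : ℕ) {V : Type*} [Fintype V] (G : SimpleGraph V) : Prop :=
  ∀ s : Finset V, s.Nonempty →
    (G.induce (s : Set V)).maxDegree + 1 ≤ (G.induce (s : Set V)).cliqueNum + k

/-- `G` is a minimal forbidden induced subgraph for `Υ_k`. -/
def MinForbUpsilon (k : ℕ) {V : Type*} [Fintype V] (G : SimpleGraph V) : Prop :=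
  ¬ UpsilonMem k G ∧
    ∀ s : Finset V, s ≠ Finset.univ → UpsilonMem k (G.induce (s : Set V))

/-- `G` is a minimal forbidden induced subgraph for `Ω_k`. -/
def MinForbOmega (k : ℕ) {V : Type*} [Fintype V] (G : SimpleGraph V) : Prop :=
  ¬ OmegaMem k G ∧
    ∀ s : Finset V, s ≠ Finset.univ → OmegaMem k (G.induce (s : Set V))

/-- `v` is a dominating vertex of `G`. -/
def IsDominatingVertex {V : Type*} (G : SimpleGraph V) (v : V) : Prop :=
  ∀ w, w ≠ v → G.Adj v w

/-- In every optimal proper coloring of `G`, every used color class has at least 2 vertices. -/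
def AllColorClassesBig {V : Type*} [Fintype V] (G : SimpleGraph V) : Prop :=
  ∀ (n : ℕ) (C : G.Coloring (Fin n)), (n : ℕ∞) = G.chromaticNumber →
    ∀ c : Fin n, (∃ u, C u = c) → 2 ≤ Fintype.card {u // C u = c}

/-- `G` is a perfect graph: clique number equals chromatic number for every induced subgraph. -/
def IsPerfect {V : Type*} [Fintype V] (G : SimpleGraph V) : Prop :=
  ∀ s : Finset V,
    (((G.induce (s : Set V)).cliqueNum : ℕ∞)) = (G.induce (s : Set V)).chromaticNumber

/-- Add a dominating vertex to `G`. -/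
def cone {V : Type*} (G : SimpleGraph V) : SimpleGraph (Option V) where
  Adj a b := match a, b with
    | some a, some b => G.Adj a b
    | some _, none => True
    | none, some _ => True
    | none, none => False
  symm := by constructor; rintro (_|a) (_|b) h <;> simp_all <;> exact h.symm
  loopless := by constructor; rintro (_|a) h <;> simp_all

/-- The claw `K_{1,3}`. -/
def claw : SimpleGraph (Fin 1 ⊕ Fin 3) := completeBipartiteGraph (Fin 1) (Fin 3)

/-- The gem: `P₄` plus a dominating vertex. -/
def gem : SimpleGraph (Option (Fin 4)) := cone (pathGraph 4)

/-- The wheel `W₄`: `C₄` plus a dominating vertex. -/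
def wheel4 : SimpleGraph (Option (Fin 4)) := cone (cycleGraph 4)

/-- The butterfly: two triangles sharing exactly one vertex. -/
def butterfly : SimpleGraph (Fin 5) :=
  SimpleGraph.fromRel (fun a b =>
    (a, b) ∈ [((0:Fin 5), (1:Fin 5)), (0,2), (1,2), (0,3), (0,4), (3,4)])

/-- `G` is a disjoint union of complete graphs. -/
def IsUnionOfCliques {V : Type*} (G : SimpleGraph V) : Prop :=
  ∀ a b c, G.Adj a b → G.Adj b c → a ≠ c → G.Adj a c

/-- `G` is neighborhood perfect: the neighborhood of every vertex induces a perfect graph. -/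
def NbhdPerfect {V : Type*} [Fintype V] (G : SimpleGraph V) : Prop :=
  ∀ v : V, IsPerfect (G.induce (G.neighborSet v))

lemma myIso.degree_eq {V W : Type*} [Fintype V] [Fintype W] {G : SimpleGraph V}
    {H : SimpleGraph W} [DecidableRel G.Adj] [DecidableRel H.Adj] (e : G ≃g H) (v : V) :
    G.degree v = H.degree (e v) := by
  rw [← card_neighborSet_eq_degree, ← card_neighborSet_eq_degree]
  exact Fintype.card_congr (e.mapNeighborSet v)

lemma myIso.maxDegree_eq {V W : Type*} [Fintype V] [Fintype W] {G : SimpleGraph V}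
    {H : SimpleGraph W} [DecidableRel G.Adj] [DecidableRel H.Adj] (e : G ≃g H) :
    G.maxDegree = H.maxDegree := by
  apply le_antisymm
  · exact G.maxDegree_le_of_forall_degree_le _ fun v => by
      rw [myIso.degree_eq e v]; exact H.degree_le_maxDegree _
  · exact H.maxDegree_le_of_forall_degree_le _ fun w => by
      rw [myIso.degree_eq e.symm w]; exact G.degree_le_maxDegree _

lemma myIso.chromaticNumber_eq {V W : Type*} {G : SimpleGraph V}
    {H : SimpleGraph W} (e : G ≃g H) :
    G.chromaticNumber = H.chromaticNumber :=
  le_antisymm (chromaticNumber_mono_of_hom e.toEmbedding.toHom)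
    (chromaticNumber_mono_of_hom e.symm.toEmbedding.toHom)

def myUnivIso {V : Type*} [Fintype V] (G : SimpleGraph V) :
    G.induce (((Finset.univ : Finset V) : Set V)) ≃g G where
  toEquiv := Equiv.subtypeUnivEquiv (fun x => Finset.mem_coe.mpr (Finset.mem_univ x))
  map_rel_iff' := Iff.rfl

lemma myInduceUniv_maxDegree {V : Type*} [Fintype V] (G : SimpleGraph V)
    [DecidableRel G.Adj] [DecidableRel (G.induce ((Finset.univ : Finset V) : Set V)).Adj] :
    (G.induce ((Finset.univ : Finset V) : Set V)).maxDegree = G.maxDegree :=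
  myIso.maxDegree_eq (myUnivIso G)

lemma myInduceUniv_chrom {V : Type*} [Fintype V] (G : SimpleGraph V) :
    (G.induce ((Finset.univ : Finset V) : Set V)).chromaticNumber = G.chromaticNumber :=
  myIso.chromaticNumber_eq (myUnivIso G)

theorem minForbUpsilon_maxDegree_eq (k : ℕ) {V : Type*} [Fintype V]
    (G : SimpleGraph V) (h : MinForbUpsilon k G) :
    (G.maxDegree : ℕ∞) = G.chromaticNumber + (k : ℕ∞) := by
  obtain ⟨hG, hmin⟩ := h
  have hne : Nonempty V := by
    by_contra hv
    rw [not_nonempty_iff] at hv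
    exact hG fun s hs => (hv.false hs.choose).elim
  have hcol : G.Colorable (Fintype.card V) := G.colorable_of_fintype
  have htop : G.chromaticNumber ≠ ⊤ := chromaticNumber_ne_top_iff_exists.mpr ⟨_, hcol⟩
  obtain ⟨c, hc⟩ : ∃ c : ℕ, (c : ℕ∞) = G.chromaticNumber := ⟨_, ENat.coe_toNat htop⟩
  have hcpos : 1 ≤ c := by
    have h0 := chromaticNumber_pos hcol
    rw [← hc] at h0
    exact_mod_cast h0
  have hlow : c + k ≤ G.maxDegree := by
    simp only [UpsilonMem, not_forall] at hG
    obtain ⟨s, hs, hfail⟩ := hG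
    rcases eq_or_ne s Finset.univ with rfl | hsne
    · rw [myInduceUniv_maxDegree, myInduceUniv_chrom, ← hc, not_le] at hfail
      have hlt : c + k < G.maxDegree + 1 := by exact_mod_cast hfail
      omega
    · exfalso
      have hnes : Nonempty ((s : Set V)) := ⟨⟨hs.choose, Finset.mem_coe.mpr hs.choose_spec⟩⟩
      have hup := hmin s hsne Finset.univ Finset.univ_nonempty
      rw [myInduceUniv_maxDegree, myInduceUniv_chrom] at hup
      exact hfail hup
  have hupb : G.maxDegree ≤ c + k := by
    obtain ⟨u, hu⟩ := G.exists_maximal_degree_vertex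
    have hdegpos : 1 ≤ G.degree u := by omega
    obtain ⟨v, hv⟩ : ∃ v, G.Adj u v := by
      have hpos : 0 < (G.neighborFinset u).card := by
        rw [card_neighborFinset_eq_degree]; omega
      obtain ⟨v, hv⟩ := Finset.card_pos.mp hpos
      exact ⟨v, (G.mem_neighborFinset u v).mp hv⟩
    set s : Finset V := Finset.univ.erase v with hsdef
    have hsne : s ≠ Finset.univ := by
      intro hh
      have hmm := Finset.mem_univ v
      rw [← hh] at hmm
      exact Finset.notMem_erase v Finset.univ hmm
    have hus : u ∈ (s : Set V) :=
      Finset.mem_coe.mpr (Finset.mem_erase.mpr ⟨hv.ne, Finset.mem_univ u⟩)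
    have hnes : Nonempty ((s : Set V)) := ⟨⟨u, hus⟩⟩
    have hineq := hmin s hsne Finset.univ Finset.univ_nonempty
    rw [myInduceUniv_maxDegree, myInduceUniv_chrom] at hineq
    have hχs : (G.induce (s : Set V)).chromaticNumber ≤ (c : ℕ∞) := by
      rw [hc]; exact chromaticNumber_mono_of_hom (Embedding.induce _).toHom
    have hfin := hineq.trans (add_le_add_left hχs _)
    have hfin' : (G.induce (s : Set V)).maxDegree + 1 ≤ c + k := by exact_mod_cast hfin
    have hdeg : G.degree u = (G.induce (s : Set V)).degree ⟨u, hus⟩ + 1 := by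
      rw [← card_neighborSet_eq_degree, ← card_neighborSet_eq_degree, ← Fintype.card_option]
      apply Fintype.card_congr
      refine ⟨fun w => if h : (w : V) = v then none else
          some ⟨⟨w.1, Finset.mem_coe.mpr (Finset.mem_erase.mpr ⟨h, Finset.mem_univ _⟩)⟩, w.2⟩,
        fun o => Option.elim o ⟨v, hv⟩ (fun x => ⟨x.1.1, x.2⟩), ?_, ?_⟩
      · intro w
        dsimp only
        by_cases h : (w : V) = v
        · rw [dif_pos h]; exact Subtype.ext h.symm
        · rw [dif_neg h]; rfl
      · rintro (_ | x)
        · exact dif_pos rfl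
        · have hx : (x.1.1 : V) ≠ v := by
            have hmem := x.1.2
            simp only [hsdef, Finset.mem_coe, Finset.mem_erase] at hmem
            exact hmem.1
          exact dif_neg hx
    have hdle := (G.induce (s : Set V)).degree_le_maxDegree ⟨u, hus⟩
    omega
  have heq : G.maxDegree = c + k := le_antisymm hupb hlow
  rw [heq, ← hc]
  push_cast
  rfl
end

section
/- For every r ≥ 1, the graph B_{2r+3}, obtained from the complement of the cycle C_{2r+3} by adding a dominating vertex, satisfies χ(B_{2r+3}) = r + 3 and Δ(B_{2r+3}) = 2r + 3; consequently B_{2r+3} is a minimal forbidden induced subgraph for Ω_{r+1} but not for Υ_{r+1}. -/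
open SimpleGraph

attribute [local instance] Classical.propDecidable

set_option linter.unnecessarySeqFocus false

lemma fin_sub_val' {N : ℕ} (x y : Fin N) :
    (x - y).val = if y.val ≤ x.val then x.val - y.val else x.val + N - y.val := by
  have hx := x.isLt; have hy := y.isLt
  rw [Fin.sub_def]
  show (N - y.val + x.val) % N = _
  rcases le_or_gt y.val x.val with h | h
  · rw [if_pos h]
    have e : N - y.val + x.val = N + (x.val - y.val) := by omega
    rw [e, Nat.add_mod_left, Nat.mod_eq_of_lt (by omega)]
  · rw [if_neg (not_le.2 h), Nat.mod_eq_of_lt (by omega)]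
    omega

lemma cycle_adj_iff_nat {N : ℕ} (hN : 2 ≤ N) {u v : Fin N} :
    (cycleGraph N).Adj u v ↔ (u.val + 1 = v.val ∨ v.val + 1 = u.val ∨
      (u.val = 0 ∧ v.val + 1 = N) ∨ (v.val = 0 ∧ u.val + 1 = N)) := by
  have hx := u.isLt; have hy := v.isLt
  rw [cycleGraph_adj', fin_sub_val', fin_sub_val']
  split_ifs <;> omega

lemma sparse_subset (t : Finset ℕ) :
    ∃ S ⊆ t, t.card ≤ 2 * S.card ∧ ∀ a ∈ S, ∀ b ∈ S, a < b → a + 2 ≤ b := by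
  induction t using Finset.strongInduction with
  | _ t ih =>
    rcases t.eq_empty_or_nonempty with rfl | ht
    · exact ⟨∅, by simp⟩
    · set m := t.min' ht with hm
      have hmt : m ∈ t := t.min'_mem ht
      have hss : t \ {m, m + 1} ⊂ t := by
        refine Finset.ssubset_iff_of_subset (Finset.sdiff_subset) |>.2 ⟨m, hmt, by simp⟩
      obtain ⟨S, hSsub, hScard, hsp⟩ := ih _ hss
      have hmS : m ∉ S := fun h => by simpa using (hSsub h)
      have hbig : ∀ b ∈ S, m + 2 ≤ b := by
        intro b hb
        have hb' := hSsub hb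
        simp only [Finset.mem_sdiff, Finset.mem_insert, Finset.mem_singleton] at hb'
        have := t.min'_le b hb'.1
        omega
      refine ⟨insert m S, ?_, ?_, ?_⟩
      · exact Finset.insert_subset hmt (hSsub.trans Finset.sdiff_subset)
      · have h1 : (insert m S).card = S.card + 1 := Finset.card_insert_of_notMem hmS
        have h2 : t.card ≤ (t \ {m, m+1}).card + 2 := by
          have := Finset.le_card_sdiff ({m, m+1} : Finset ℕ) t
          have hc2 : ({m, m+1} : Finset ℕ).card ≤ 2 := Finset.card_insert_le _ _ |>.trans (by simp)
          omega
        omega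
      · intro a ha b hb hab
        rcases Finset.mem_insert.1 ha with rfl | ha <;>
          rcases Finset.mem_insert.1 hb with rfl | hb
        · omega
        · exact hbig b hb
        · have := hbig a ha; omega
        · exact hsp a ha b hb hab

lemma indep_card_le (r : ℕ) (S : Finset (Fin (2*r+3)))
    (h : ∀ a ∈ S, ∀ b ∈ S, a ≠ b → ¬ (cycleGraph (2*r+3)).Adj a b) : S.card ≤ r + 1 := by
  classical
  haveI : NeZero (2*r+3) := NeZero.of_pos (by omega)
  have h1 : (1 : Fin (2*r+3)).val = 1 := by rw [Fin.val_one']; exact Nat.mod_eq_of_lt (by omega)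
  have hinj : Function.Injective (fun i : Fin (2*r+3) => i + 1) := add_left_injective 1
  have hdisj : Disjoint S (S.image (· + 1)) := by
    rw [Finset.disjoint_right]
    intro j hj hjS
    obtain ⟨i, hi, rfl⟩ := Finset.mem_image.mp hj
    have hadj : (cycleGraph (2*r+3)).Adj i (i + 1) := by
      rw [cycleGraph_adj']
      right
      rw [add_sub_cancel_left, h1]
    have hne : i ≠ i + 1 := by
      intro he
      have : (1 : Fin (2*r+3)) = 0 := by
        have := (left_eq_add).1 he
        exact this
      rw [Fin.ext_iff, h1] at this
      simp at this
    exact h i hi (i+1) hjS hne hadj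
  have hcard : S.card + S.card ≤ 2*r+3 := by
    have := Finset.card_le_univ (S ∪ S.image (· + 1))
    rw [Finset.card_union_of_disjoint hdisj, Finset.card_image_of_injective _ hinj] at this
    simpa using this
  omega

lemma cone_adj_some_some {V : Type*} (G : SimpleGraph V) (a b : V) :
    (cone G).Adj (some a) (some b) ↔ G.Adj a b := Iff.rfl

lemma cone_adj_none_some {V : Type*} (G : SimpleGraph V) (a : V) :
    (cone G).Adj none (some a) := trivial

lemma cone_adj_some_none {V : Type*} (G : SimpleGraph V) (a : V) :
    (cone G).Adj (some a) none := trivial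

lemma cone_adj_none_none {V : Type*} (G : SimpleGraph V) :
    ¬ (cone G).Adj none none := fun h => h

lemma B_adj_some_some (r : ℕ) (i j : Fin (2*r+3)) :
    (cone ((cycleGraph (2*r+3))ᶜ)).Adj (some i) (some j) ↔
      i ≠ j ∧ ¬ (cycleGraph (2*r+3)).Adj i j := by
  rw [cone_adj_some_some, compl_adj]
lemma B_filter_bound (r : ℕ) (T : Finset (Option (Fin (2*r+3))))
    (hT : T ≠ Finset.univ) :
    ∃ Q ⊆ T, (cone ((cycleGraph (2*r+3))ᶜ)).IsClique (Q : Set (Option (Fin (2*r+3)))) ∧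
      ∀ v ∈ T, (T.filter ((cone ((cycleGraph (2*r+3))ᶜ)).Adj v)).card ≤ Q.card + r := by
  classical
  haveI : NeZero (2*r+3) := NeZero.of_pos (by omega)
  set t : Finset (Fin (2*r+3)) := Finset.univ.filter (fun i => some i ∈ T) with ht
  have hmem_t : ∀ i : Fin (2*r+3), i ∈ t ↔ some i ∈ T := fun i => by simp [ht]
  by_cases htu : t = Finset.univ
  · -- every cycle vertex present, so `none ∉ T`
    have hsome : ∀ i : Fin (2*r+3), some i ∈ T := fun i =>
      (hmem_t i).1 (htu ▸ Finset.mem_univ i)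
    have hnone : none ∉ T := by
      intro hn
      apply hT
      apply Finset.eq_univ_iff_forall.2
      rintro (_ | i)
      exacts [hn, hsome i]
    have hQinj : Function.Injective
        (fun k : Fin (r+1) => some (⟨2*k.val, by have := k.isLt; omega⟩ : Fin (2*r+3))) := by
      intro a b hab
      simp only [Option.some.injEq, Fin.mk.injEq] at hab
      exact Fin.ext (by omega)
    set Q : Finset (Option (Fin (2*r+3))) := Finset.univ.image
        (fun k : Fin (r+1) => some (⟨2*k.val, by have := k.isLt; omega⟩ : Fin (2*r+3))) with hQ
    have hQcard : Q.card = r + 1 := by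
      rw [hQ, Finset.card_image_of_injective _ hQinj, Finset.card_univ, Fintype.card_fin]
    refine ⟨Q, ?_, ?_, ?_⟩
    · intro w hw
      rw [hQ] at hw
      obtain ⟨k, _, rfl⟩ := Finset.mem_image.1 hw
      exact hsome _
    · rintro x hx y hy hxy
      rw [Finset.mem_coe, hQ] at hx hy
      obtain ⟨a, _, rfl⟩ := Finset.mem_image.1 hx
      obtain ⟨b, _, rfl⟩ := Finset.mem_image.1 hy
      have hab : a.val ≠ b.val := by
        intro h
        exact hxy (by simp [Fin.ext_iff, h])
      rw [B_adj_some_some]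
      constructor
      · intro h
        rw [Fin.ext_iff] at h
        simp only [Fin.val_mk] at h
        omega
      · intro hadj
        rw [cycle_adj_iff_nat (by omega)] at hadj
        simp only [Fin.val_mk] at hadj
        have := a.isLt
        have := b.isLt
        omega
    · intro v hv
      obtain ⟨i, rfl⟩ : ∃ i, v = some i := by
        cases v with
        | none => exact absurd hv hnone
        | some i => exact ⟨i, rfl⟩
      have hiLt := i.isLt
      obtain ⟨ip, hadjp, hipv⟩ : ∃ ip : Fin (2*r+3), (cycleGraph (2*r+3)).Adj i ip ∧
          (ip.val = i.val + 1 ∨ (ip.val = 0 ∧ i.val = 2*r+2)) := by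
        by_cases h : i.val + 1 < 2*r+3
        · refine ⟨⟨i.val+1, h⟩, ?_, Or.inl rfl⟩
          rw [cycle_adj_iff_nat (by omega)]
          exact Or.inl rfl
        · refine ⟨⟨0, by omega⟩, ?_, Or.inr ⟨rfl, by omega⟩⟩
          rw [cycle_adj_iff_nat (by omega)]
          exact Or.inr (Or.inr (Or.inr ⟨rfl, by omega⟩))
      obtain ⟨im, hadjm, himv⟩ : ∃ im : Fin (2*r+3), (cycleGraph (2*r+3)).Adj i im ∧
          (im.val + 1 = i.val ∨ (i.val = 0 ∧ im.val = 2*r+2)) := by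
        by_cases h : 1 ≤ i.val
        · refine ⟨⟨i.val-1, by omega⟩, ?_, Or.inl (by simp only [Fin.val_mk]; omega)⟩
          rw [cycle_adj_iff_nat (by omega)]
          refine Or.inr (Or.inl ?_)
          simp only [Fin.val_mk]
          omega
        · refine ⟨⟨2*r+2, by omega⟩, ?_, Or.inr ⟨by omega, rfl⟩⟩
          rw [cycle_adj_iff_nat (by omega)]
          refine Or.inr (Or.inr (Or.inl ⟨by omega, ?_⟩))
          simp only [Fin.val_mk]
      have hipLt := ip.isLt
      have himLt := im.isLt
      have hd1 : i.val ≠ ip.val := by omega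
      have hd2 : i.val ≠ im.val := by omega
      have hd3 : ip.val ≠ im.val := by omega
      have hsub : T.filter ((cone ((cycleGraph (2*r+3))ᶜ)).Adj (some i)) ⊆
          Finset.univ \ {none, some i, some ip, some im} := by
        intro w hw
        obtain ⟨hwT, hadj⟩ := Finset.mem_filter.1 hw
        cases w with
        | none => exact absurd hwT hnone
        | some j =>
          obtain ⟨hne, hnadj⟩ := (B_adj_some_some r i j).1 hadj
          refine Finset.mem_sdiff.2 ⟨Finset.mem_univ _, ?_⟩
          simp only [Finset.mem_insert, Finset.mem_singleton, Option.some.injEq]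
          push_neg
          refine ⟨by simp, ?_, ?_, ?_⟩
          · exact fun h => hne h.symm
          · exact fun h => hnadj (by rw [h]; exact hadjp)
          · exact fun h => hnadj (by rw [h]; exact hadjm)
      have hcard4 : ({none, some i, some ip, some im} :
          Finset (Option (Fin (2*r+3)))).card = 4 := by
        rw [Finset.card_insert_of_notMem (by simp),
          Finset.card_insert_of_notMem (by
            simp only [Finset.mem_insert, Finset.mem_singleton, Option.some.injEq]
            push_neg
            exact ⟨fun h => hd1 (h ▸ rfl), fun h => hd2 (h ▸ rfl)⟩),
          Finset.card_insert_of_notMem (by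
            simp only [Finset.mem_singleton, Option.some.injEq]
            exact fun h => hd3 (h ▸ rfl)),
          Finset.card_singleton]
      calc (T.filter ((cone ((cycleGraph (2*r+3))ᶜ)).Adj (some i))).card
          ≤ (Finset.univ \ {none, some i, some ip, some im}).card :=
            Finset.card_le_card hsub
        _ = Fintype.card (Option (Fin (2*r+3))) - 4 := by
            rw [Finset.card_sdiff_of_subset (Finset.subset_univ _), hcard4, Finset.card_univ]
        _ ≤ Q.card + r := by
            rw [hQcard, Fintype.card_option, Fintype.card_fin]
            omega
  · -- t is a proper subset of the cycle vertices
    obtain ⟨m, hm⟩ : ∃ m : Fin (2*r+3), m ∉ t := by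
      by_contra h
      push_neg at h
      exact htu (Finset.eq_univ_iff_forall.2 h)
    have htcard : t.card ≤ 2*r+2 := by
      have h1 : t.card < Fintype.card (Fin (2*r+3)) := by
        rw [← Finset.card_univ]
        exact Finset.card_lt_card (Finset.ssubset_univ_iff.2 htu)
      rw [Fintype.card_fin] at h1
      omega
    have hφinj : Function.Injective (fun i : Fin (2*r+3) => (i - m).val) := by
      intro a b hab
      have h2 : a - m = b - m := Fin.ext hab
      simpa using congrArg (· + m) h2
    obtain ⟨S', hS'sub, hS'card, hsp⟩ := sparse_subset (t.image (fun i => (i - m).val))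
    set S : Finset (Fin (2*r+3)) := t.filter (fun i => (i - m).val ∈ S') with hS
    have hSsub : S ⊆ t := Finset.filter_subset _ _
    have himg : S.image (fun i => (i - m).val) = S' := by
      apply Finset.Subset.antisymm
      · intro x hx
        obtain ⟨i, hi, rfl⟩ := Finset.mem_image.1 hx
        exact (Finset.mem_filter.1 hi).2
      · intro x hx
        obtain ⟨i, hi, rfl⟩ := Finset.mem_image.1 (hS'sub hx)
        exact Finset.mem_image.2 ⟨i, Finset.mem_filter.2 ⟨hi, hx⟩, rfl⟩
    have hScard : S.card = S'.card := by
      rw [← himg, Finset.card_image_of_injective _ hφinj]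
    have hkey : t.card ≤ S.card + r + 1 := by
      have h7 : (t.image (fun i => (i - m).val)).card = t.card :=
        Finset.card_image_of_injective _ hφinj
      rw [h7] at hS'card
      omega
    have hφpos : ∀ i ∈ t, 1 ≤ (i - m).val := by
      intro i hi
      by_contra h0
      have h1 : i - m = 0 := by
        apply Fin.ext
        rw [Fin.val_zero]
        omega
      rw [sub_eq_zero] at h1
      exact hm (h1 ▸ hi)
    have hSindep : ∀ a ∈ S, ∀ b ∈ S, a ≠ b → ¬ (cycleGraph (2*r+3)).Adj a b := by
      intro a ha b hb hab hadj
      have he1 : (a - m) - (b - m) = a - b := sub_sub_sub_cancel_right a b m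
      have he2 : (b - m) - (a - m) = b - a := sub_sub_sub_cancel_right b a m
      rw [cycleGraph_adj'] at hadj
      have h1 := hφpos a (hSsub ha)
      have h2 := hφpos b (hSsub hb)
      have hne : (a - m).val ≠ (b - m).val := fun h => hab (hφinj h)
      have hma : (a - m).val ∈ S' := (Finset.mem_filter.1 ha).2
      have hmb : (b - m).val ∈ S' := (Finset.mem_filter.1 hb).2
      have hsp1 : (a - m).val < (b - m).val → (a - m).val + 2 ≤ (b - m).val :=
        fun h => hsp _ hma _ hmb h
      have hsp2 : (b - m).val < (a - m).val → (b - m).val + 2 ≤ (a - m).val :=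
        fun h => hsp _ hmb _ hma h
      have hLa := (a - m).isLt
      have hLb := (b - m).isLt
      rcases hadj with h | h
      · have h' : ((a - m) - (b - m)).val = 1 := by rw [he1]; exact h
        rw [fin_sub_val'] at h'
        split_ifs at h' <;> omega
      · have h' : ((b - m) - (a - m)).val = 1 := by rw [he2]; exact h
        rw [fin_sub_val'] at h'
        split_ifs at h' <;> omega
    have hSclique : (cone ((cycleGraph (2*r+3))ᶜ)).IsClique
        ((S.image some : Finset (Option (Fin (2*r+3)))) : Set (Option (Fin (2*r+3)))) := by
      rintro x hx y hy hxy
      rw [Finset.mem_coe] at hx hy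
      obtain ⟨a, ha, rfl⟩ := Finset.mem_image.1 hx
      obtain ⟨b, hb, rfl⟩ := Finset.mem_image.1 hy
      have hab : a ≠ b := fun h => hxy (h ▸ rfl)
      exact (B_adj_some_some r a b).2 ⟨hab, hSindep a ha b hb hab⟩
    have hSsubT : (S.image some : Finset (Option (Fin (2*r+3)))) ⊆ T := by
      intro w hw
      obtain ⟨a, ha, rfl⟩ := Finset.mem_image.1 hw
      exact (hmem_t a).1 (hSsub ha)
    have hSicard : (S.image some).card = S.card :=
      Finset.card_image_of_injective _ (Option.some_injective _)
    -- bound for a vertex `some i ∈ T`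
    have hbound_some : ∀ i : Fin (2*r+3), some i ∈ T →
        (T.filter ((cone ((cycleGraph (2*r+3))ᶜ)).Adj (some i))).card ≤
          (if none ∈ T then t.card + 1 else t.card) - 1 := by
      intro i hi
      have hit : i ∈ t := (hmem_t i).2 hi
      by_cases hnT : none ∈ T
      · rw [if_pos hnT]
        have hsub : T.filter ((cone ((cycleGraph (2*r+3))ᶜ)).Adj (some i)) ⊆
            (insert none (t.image some)).erase (some i) := by
          intro w hw
          obtain ⟨hwT, hadj⟩ := Finset.mem_filter.1 hw
          cases w with
          | none => exact Finset.mem_erase.2 ⟨by simp, Finset.mem_insert_self _ _⟩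
          | some j =>
            obtain ⟨hne, _⟩ := (B_adj_some_some r i j).1 hadj
            refine Finset.mem_erase.2 ⟨fun h => hne (Option.some_injective _ h).symm, ?_⟩
            exact Finset.mem_insert_of_mem (Finset.mem_image_of_mem _ ((hmem_t j).2 hwT))
        calc (T.filter _).card ≤ ((insert none (t.image some)).erase (some i)).card :=
              Finset.card_le_card hsub
          _ = (insert none (t.image some)).card - 1 :=
              Finset.card_erase_of_mem (Finset.mem_insert_of_mem
                (Finset.mem_image_of_mem _ hit))
          _ ≤ (t.card + 1) - 1 := by
              have h3 := Finset.card_insert_le (none : Option (Fin (2*r+3))) (t.image some)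
              have h4 : (t.image some).card = t.card :=
                Finset.card_image_of_injective _ (Option.some_injective _)
              omega
      · rw [if_neg hnT]
        have hsub : T.filter ((cone ((cycleGraph (2*r+3))ᶜ)).Adj (some i)) ⊆
            (t.image some).erase (some i) := by
          intro w hw
          obtain ⟨hwT, hadj⟩ := Finset.mem_filter.1 hw
          cases w with
          | none => exact absurd hwT hnT
          | some j =>
            obtain ⟨hne, _⟩ := (B_adj_some_some r i j).1 hadj
            refine Finset.mem_erase.2 ⟨fun h => hne (Option.some_injective _ h).symm, ?_⟩
            exact Finset.mem_image_of_mem _ ((hmem_t j).2 hwT)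
        calc (T.filter _).card ≤ ((t.image some).erase (some i)).card :=
              Finset.card_le_card hsub
          _ = (t.image some).card - 1 :=
              Finset.card_erase_of_mem (Finset.mem_image_of_mem _ hit)
          _ = t.card - 1 := by
              rw [Finset.card_image_of_injective _ (Option.some_injective _)]
    by_cases hnT : none ∈ T
    · refine ⟨insert none (S.image some), Finset.insert_subset hnT hSsubT, ?_, ?_⟩
      · rintro x hx y hy hxy
        rw [Finset.coe_insert, Set.mem_insert_iff] at hx hy
        rcases hx with rfl | hx <;> rcases hy with rfl | hy
        · exact absurd rfl hxy
        · obtain ⟨a, _, rfl⟩ := Finset.mem_image.1 (Finset.mem_coe.1 hy)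
          exact cone_adj_none_some _ a
        · obtain ⟨a, _, rfl⟩ := Finset.mem_image.1 (Finset.mem_coe.1 hx)
          exact cone_adj_some_none _ a
        · exact hSclique hx hy hxy
      · have hQc : (insert none (S.image some)).card = S.card + 1 := by
          rw [Finset.card_insert_of_notMem (by simp), hSicard]
        intro v hv
        cases v with
        | none =>
          have hsub : T.filter ((cone ((cycleGraph (2*r+3))ᶜ)).Adj none) ⊆ t.image some := by
            intro w hw
            obtain ⟨hwT, hadj⟩ := Finset.mem_filter.1 hw
            cases w with
            | none => exact absurd hadj (cone_adj_none_none _)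
            | some j => exact Finset.mem_image_of_mem _ ((hmem_t j).2 hwT)
          calc (T.filter _).card ≤ (t.image some).card := Finset.card_le_card hsub
            _ = t.card := Finset.card_image_of_injective _ (Option.some_injective _)
            _ ≤ S.card + 1 + r := by omega
            _ = (insert none (S.image some)).card + r := by rw [hQc]
        | some i =>
          have := hbound_some i hv
          rw [if_pos hnT] at this
          rw [hQc]
          omega
    · refine ⟨S.image some, hSsubT, hSclique, ?_⟩
      intro v hv
      cases v with
      | none => exact absurd hv hnT
      | some i =>
        have h5 := hbound_some i hv
        rw [if_neg hnT] at h5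
        have hit : i ∈ t := (hmem_t i).2 hv
        have h6 : 1 ≤ t.card := Finset.card_pos.2 ⟨i, hit⟩
        rw [hSicard]
        omega

lemma core_main (r : ℕ) {W : Type*} [Fintype W] (H : SimpleGraph W)
    (f : H ↪g cone ((cycleGraph (2*r+3))ᶜ)) (hf : ¬ Function.Surjective f) :
    H.maxDegree + 1 ≤ H.cliqueNum + (r + 1) := by
  classical
  set T : Finset (Option (Fin (2*r+3))) := Finset.univ.image f with hTdef
  have hT : T ≠ Finset.univ := by
    intro h
    apply hf
    intro v
    have hv : v ∈ T := h ▸ Finset.mem_univ v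
    obtain ⟨w, _, hw⟩ := Finset.mem_image.1 hv
    exact ⟨w, hw⟩
  obtain ⟨Q, hQT, hQclique, hbd⟩ := B_filter_bound r T hT
  set P : Finset W := Finset.univ.filter (fun w => f w ∈ Q) with hPdef
  have hPcard : P.card = Q.card := by
    apply Finset.card_bij (fun w _ => f w)
    · intro w hw; exact (Finset.mem_filter.1 hw).2
    · intro a _ b _ hab; exact f.injective hab
    · intro q hq
      obtain ⟨w, _, hw⟩ := Finset.mem_image.1 (hQT hq)
      exact ⟨w, Finset.mem_filter.2 ⟨Finset.mem_univ _, hw ▸ hq⟩, hw⟩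
  have hPclique : H.IsClique (P : Set W) := by
    intro a ha b hb hab
    have h1 : f a ∈ Q := (Finset.mem_filter.1 (Finset.mem_coe.1 ha)).2
    have h2 : f b ∈ Q := (Finset.mem_filter.1 (Finset.mem_coe.1 hb)).2
    have h3 : f a ≠ f b := fun h => hab (f.injective h)
    exact f.map_rel_iff.1 (hQclique h1 h2 h3)
  have hclique : Q.card ≤ H.cliqueNum :=
    hPcard ▸ @SimpleGraph.IsClique.card_le_cliqueNum _ H _ P hPclique
  have hdeg : ∀ w : W, H.degree w ≤ Q.card + r := by
    intro w
    have hfw : f w ∈ T := Finset.mem_image_of_mem _ (Finset.mem_univ w)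
    have hcard : H.degree w ≤
        (T.filter ((cone ((cycleGraph (2*r+3))ᶜ)).Adj (f w))).card := by
      show (H.neighborFinset w).card ≤ _
      apply Finset.card_le_card_of_injOn f
      · intro u hu
        rw [Finset.mem_coe, SimpleGraph.mem_neighborFinset] at hu
        exact Finset.mem_filter.2
          ⟨Finset.mem_image_of_mem _ (Finset.mem_univ u), f.map_rel_iff.2 hu⟩
      · exact fun a _ b _ h => f.injective h
    exact hcard.trans (hbd (f w) hfw)
  have hmax : H.maxDegree ≤ Q.card + r := SimpleGraph.maxDegree_le_of_forall_degree_le _ _ hdeg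
  omega

lemma B_colorable (r : ℕ) : (cone ((cycleGraph (2*r+3))ᶜ)).Colorable (r+3) := by
  refine ⟨SimpleGraph.Coloring.mk
    (fun v => v.elim (⟨r+2, by omega⟩ : Fin (r+3))
      (fun i => ⟨i.val/2, by have := i.isLt; omega⟩)) ?_⟩
  rintro (_|a) (_|b) hadj
  · exact absurd hadj (cone_adj_none_none _)
  · have := b.isLt
    simp only [Option.elim, ne_eq, Fin.mk.injEq]
    omega
  · have := a.isLt
    simp only [Option.elim, ne_eq, Fin.mk.injEq]
    omega
  · obtain ⟨hne, hnadj⟩ := (B_adj_some_some r a b).1 hadj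
    simp only [Option.elim, ne_eq, Fin.mk.injEq]
    intro h
    apply hnadj
    rw [cycle_adj_iff_nat (by omega)]
    have := a.isLt
    have := b.isLt
    have hne' : a.val ≠ b.val := fun hh => hne (Fin.ext hh)
    omega

lemma B_not_colorable (r : ℕ) (hr : 1 ≤ r) : ¬ (cone ((cycleGraph (2*r+3))ᶜ)).Colorable (r+2) := by
  rintro ⟨C⟩
  classical
  have hmaps : ∀ i ∈ (Finset.univ : Finset (Fin (2*r+3))),
      C (some i) ∈ Finset.univ.erase (C none) := fun i _ =>
    Finset.mem_erase.2 ⟨Ne.symm (C.valid (cone_adj_none_some _ i)), Finset.mem_univ _⟩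
  have hfib : ∀ c ∈ Finset.univ.erase (C none),
      ((Finset.univ : Finset (Fin (2*r+3))).filter
        (fun i => C (some i) = c)).card ≤ 2 := by
    intro c _
    by_contra hgt
    push_neg at hgt
    obtain ⟨a, b, d, ha, hb, hd, hab, had, hbd⟩ := Finset.two_lt_card_iff.1 hgt
    have key : ∀ x y : Fin (2*r+3),
        x ∈ (Finset.univ : Finset (Fin (2*r+3))).filter (fun i => C (some i) = c) →
        y ∈ (Finset.univ : Finset (Fin (2*r+3))).filter (fun i => C (some i) = c) →
        x ≠ y → (cycleGraph (2*r+3)).Adj x y := by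
      intro x y hx hy hxy
      have hcx : C (some x) = c := (Finset.mem_filter.1 hx).2
      have hcy : C (some y) = c := (Finset.mem_filter.1 hy).2
      by_contra hnadj
      exact C.valid ((B_adj_some_some r x y).2 ⟨hxy, hnadj⟩) (hcx.trans hcy.symm)
    have k1 := key a b ha hb hab
    have k2 := key a d ha hd had
    have k3 := key b d hb hd hbd
    rw [cycle_adj_iff_nat (by omega)] at k1 k2 k3
    have h1 := a.isLt
    have h2 := b.isLt
    have h3 := d.isLt
    have e1 : a.val ≠ b.val := fun h => hab (Fin.ext h)
    have e2 : a.val ≠ d.val := fun h => had (Fin.ext h)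
    have e3 : b.val ≠ d.val := fun h => hbd (Fin.ext h)
    omega
  have hle := Finset.card_le_mul_card_image_of_maps_to hmaps 2 hfib
  rw [Finset.card_univ, Fintype.card_fin,
    Finset.card_erase_of_mem (Finset.mem_univ _), Finset.card_univ, Fintype.card_fin] at hle
  omega

lemma B_chromatic (r : ℕ) (hr : 1 ≤ r) :
    (cone ((cycleGraph (2*r+3))ᶜ)).chromaticNumber = ((r + 3 : ℕ) : ℕ∞) := by
  apply le_antisymm
  · exact (B_colorable r).chromaticNumber_le
  · have h2 : ¬ ((cone ((cycleGraph (2*r+3))ᶜ)).chromaticNumber ≤ ((r+2 : ℕ) : ℕ∞)) :=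
      fun hle => B_not_colorable r hr (SimpleGraph.chromaticNumber_le_iff_colorable.1 hle)
    have h3 := not_le.1 h2
    have h4 := (ENat.add_one_le_iff (ENat.coe_ne_top (r+2))).2 h3
    calc ((r+3:ℕ) : ℕ∞) = ((r+2:ℕ) : ℕ∞) + 1 := by push_cast; ring
      _ ≤ _ := h4

lemma B_maxDegree (r : ℕ) : (cone ((cycleGraph (2*r+3))ᶜ)).maxDegree = 2*r+3 := by
  classical
  apply le_antisymm
  · apply SimpleGraph.maxDegree_le_of_forall_degree_le
    intro v
    have h := SimpleGraph.degree_lt_card_verts (G := cone ((cycleGraph (2*r+3))ᶜ)) v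
    rw [Fintype.card_option, Fintype.card_fin] at h
    omega
  · have hnb : (cone ((cycleGraph (2*r+3))ᶜ)).neighborFinset none =
        ({none} : Finset (Option (Fin (2*r+3))))ᶜ := by
      ext w
      rw [SimpleGraph.mem_neighborFinset, Finset.mem_compl, Finset.mem_singleton]
      cases w with
      | none => simp [cone_adj_none_none]
      | some a => simp [cone_adj_none_some]
    have hd : (cone ((cycleGraph (2*r+3))ᶜ)).degree none = 2*r+3 := by
      show ((cone ((cycleGraph (2*r+3))ᶜ)).neighborFinset none).card = _
      rw [hnb, Finset.card_compl, Finset.card_singleton, Fintype.card_option, Fintype.card_fin]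
      omega
    have h2 := SimpleGraph.degree_le_maxDegree (cone ((cycleGraph (2*r+3))ᶜ)) none
    omega

lemma B_clique_bound (r : ℕ) (Q : Finset (Option (Fin (2*r+3))))
    (hQ : (cone ((cycleGraph (2*r+3))ᶜ)).IsClique (Q : Set (Option (Fin (2*r+3))))) :
    Q.card ≤ r + 2 := by
  classical
  set Sc : Finset (Fin (2*r+3)) := Finset.univ.filter (fun i => some i ∈ Q) with hSc
  have hind : ∀ a ∈ Sc, ∀ b ∈ Sc, a ≠ b → ¬ (cycleGraph (2*r+3)).Adj a b := by
    intro a ha b hb hab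
    have h1 : some a ∈ Q := (Finset.mem_filter.1 ha).2
    have h2 : some b ∈ Q := (Finset.mem_filter.1 hb).2
    have h3 := hQ (Finset.mem_coe.2 h1) (Finset.mem_coe.2 h2)
      (fun h => hab (Option.some_injective _ h))
    exact ((B_adj_some_some r a b).1 h3).2
  have hcard := indep_card_le r Sc hind
  have hsub : Q ⊆ insert none (Sc.image some) := by
    intro w hw
    cases w with
    | none => exact Finset.mem_insert_self _ _
    | some j => exact Finset.mem_insert_of_mem (Finset.mem_image_of_mem _
        (Finset.mem_filter.2 ⟨Finset.mem_univ _, hw⟩))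
  calc Q.card ≤ _ := Finset.card_le_card hsub
    _ ≤ (Sc.image some).card + 1 := Finset.card_insert_le _ _
    _ = Sc.card + 1 := by rw [Finset.card_image_of_injective _ (Option.some_injective _)]
    _ ≤ r + 2 := by omega

theorem antiHoleCone_minForbOmega_not_minForbUpsilon (r : ℕ) (hr : 1 ≤ r) :
    (cone ((cycleGraph (2 * r + 3))ᶜ)).chromaticNumber = ((r + 3 : ℕ) : ℕ∞) ∧
      (cone ((cycleGraph (2 * r + 3))ᶜ)).maxDegree = 2 * r + 3 ∧
      MinForbOmega (r + 1) (cone ((cycleGraph (2 * r + 3))ᶜ)) ∧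
      ¬ MinForbUpsilon (r + 1) (cone ((cycleGraph (2 * r + 3))ᶜ)) := by
  classical
  refine ⟨B_chromatic r hr, B_maxDegree r, ⟨?_, ?_⟩, ?_⟩
  · -- B is not in Ω_{r+1}
    intro hOm
    have h := hOm Finset.univ ⟨none, Finset.mem_univ _⟩
    have hx0mem : (none : Option (Fin (2*r+3))) ∈
        ((Finset.univ : Finset (Option (Fin (2*r+3)))) : Set (Option (Fin (2*r+3)))) := by simp
    have hdeg : 2*r+3 ≤ ((cone ((cycleGraph (2*r+3))ᶜ)).induce
        ((Finset.univ : Finset (Option (Fin (2*r+3)))) :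
          Set (Option (Fin (2*r+3))))).degree ⟨none, hx0mem⟩ := by
      have hc : 2*r+3 = (Finset.univ : Finset (Fin (2*r+3))).card := by
        rw [Finset.card_univ, Fintype.card_fin]
      refine le_trans (le_of_eq hc) ?_
      show _ ≤ (((cone ((cycleGraph (2*r+3))ᶜ)).induce
        ((Finset.univ : Finset (Option (Fin (2*r+3)))) :
          Set (Option (Fin (2*r+3))))).neighborFinset ⟨none, hx0mem⟩).card
      apply Finset.card_le_card_of_injOn (fun i => ⟨some i, by simp⟩)
      · intro i _
        rw [Finset.mem_coe, SimpleGraph.mem_neighborFinset]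
        exact cone_adj_none_some ((cycleGraph (2*r+3))ᶜ) i
      · intro a _ b _ hab
        have h2 := congrArg Subtype.val hab
        exact Option.some_injective _ h2
    have hmax : 2*r+3 ≤ ((cone ((cycleGraph (2*r+3))ᶜ)).induce
        ((Finset.univ : Finset (Option (Fin (2*r+3)))) :
          Set (Option (Fin (2*r+3))))).maxDegree :=
      hdeg.trans (SimpleGraph.degree_le_maxDegree _ _)
    obtain ⟨q, hq⟩ := SimpleGraph.exists_isNClique_cliqueNum
      (G := (cone ((cycleGraph (2*r+3))ᶜ)).induce
        ((Finset.univ : Finset (Option (Fin (2*r+3)))) : Set (Option (Fin (2*r+3)))))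
    have hqc : ((cone ((cycleGraph (2*r+3))ᶜ)).induce
        ((Finset.univ : Finset (Option (Fin (2*r+3)))) :
          Set (Option (Fin (2*r+3))))).cliqueNum ≤ r + 2 := by
      rw [← hq.2]
      have himg : (cone ((cycleGraph (2*r+3))ᶜ)).IsClique
          ((q.image Subtype.val : Finset (Option (Fin (2*r+3)))) :
            Set (Option (Fin (2*r+3)))) := by
        rintro x hx y hy hxy
        rw [Finset.mem_coe] at hx hy
        obtain ⟨⟨a, hamem⟩, ha, rfl⟩ := Finset.mem_image.1 hx
        obtain ⟨⟨b, hbmem⟩, hb, rfl⟩ := Finset.mem_image.1 hy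
        have hne : (⟨a, hamem⟩ : { x // x ∈ ((Finset.univ : Finset (Option (Fin (2*r+3)))) :
            Set (Option (Fin (2*r+3)))) }) ≠ ⟨b, hbmem⟩ :=
          fun hh => hxy (congrArg Subtype.val hh)
        exact hq.1 (Finset.mem_coe.2 ha) (Finset.mem_coe.2 hb) hne
      have hbd := B_clique_bound r _ himg
      rwa [Finset.card_image_of_injective _ Subtype.val_injective] at hbd
    omega
  · -- every proper induced subgraph is in Ω_{r+1}
    intro s hs t _ht
    obtain ⟨v, hv⟩ : ∃ v, v ∉ s := by
      by_contra hc
      push_neg at hc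
      exact hs (Finset.eq_univ_iff_forall.2 hc)
    refine core_main r _
      ((SimpleGraph.Embedding.induce _).comp (SimpleGraph.Embedding.induce _)) ?_
    intro hsurj
    obtain ⟨x, hx⟩ := hsurj v
    apply hv
    have hx' : (((SimpleGraph.Embedding.induce
        ((t : Set ((s : Set (Option (Fin (2*r+3)))) : Type _)))) x :
          (s : Set (Option (Fin (2*r+3))))) : Option (Fin (2*r+3))) = v := hx
    rw [← hx']
    exact Finset.mem_coe.1 ((SimpleGraph.Embedding.induce _) x).2
  · -- B is not a minimal forbidden subgraph for Υ_{r+1} since B ∈ Υ_{r+1}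
    intro hMF
    apply hMF.1
    intro s _hsne
    by_cases hs : s = Finset.univ
    · subst hs
      have hcard : Fintype.card
          ((Finset.univ : Finset (Option (Fin (2*r+3)))) : Set (Option (Fin (2*r+3)))) =
            2*r+4 := by
        rw [Fintype.card_of_subtype Finset.univ (by simp)]
        rw [Finset.card_univ, Fintype.card_option, Fintype.card_fin]
      have hmax : ((cone ((cycleGraph (2*r+3))ᶜ)).induce
          ((Finset.univ : Finset (Option (Fin (2*r+3)))) :
            Set (Option (Fin (2*r+3))))).maxDegree ≤ 2*r+3 := by
        apply SimpleGraph.maxDegree_le_of_forall_degree_le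
        intro v
        have hlt := SimpleGraph.degree_lt_card_verts (G := (cone ((cycleGraph (2*r+3))ᶜ)).induce
          ((Finset.univ : Finset (Option (Fin (2*r+3)))) : Set (Option (Fin (2*r+3))))) v
        rw [hcard] at hlt
        omega
      have hchi : ((r+3:ℕ) : ℕ∞) ≤ ((cone ((cycleGraph (2*r+3))ᶜ)).induce
          ((Finset.univ : Finset (Option (Fin (2*r+3)))) :
            Set (Option (Fin (2*r+3))))).chromaticNumber := by
        have hnc : ¬ ((cone ((cycleGraph (2*r+3))ᶜ)).induce
            ((Finset.univ : Finset (Option (Fin (2*r+3)))) :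
              Set (Option (Fin (2*r+3))))).Colorable (r+2) := by
          rintro ⟨C⟩
          apply B_not_colorable r hr
          refine ⟨SimpleGraph.Coloring.mk (fun v => C ⟨v, by simp⟩) ?_⟩
          intro a b hab
          exact C.valid hab
        have h2 := fun hle => hnc (SimpleGraph.chromaticNumber_le_iff_colorable.1 hle)
        have h4 := (ENat.add_one_le_iff (ENat.coe_ne_top (r+2))).2 (not_le.1 h2)
        calc ((r+3:ℕ) : ℕ∞) = ((r+2:ℕ) : ℕ∞) + 1 := by push_cast; ring
          _ ≤ _ := h4
      refine le_trans ?_ (add_le_add hchi (le_refl ((r+1 : ℕ) : ℕ∞)))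
      have h5 : ((cone ((cycleGraph (2*r+3))ᶜ)).induce
          ((Finset.univ : Finset (Option (Fin (2*r+3)))) :
            Set (Option (Fin (2*r+3))))).maxDegree + 1 ≤ (r+3) + (r+1) := by omega
      exact_mod_cast h5
    · obtain ⟨v, hv⟩ : ∃ v, v ∉ s := by
        by_contra hc
        push_neg at hc
        exact hs (Finset.eq_univ_iff_forall.2 hc)
      have hns : ¬ Function.Surjective
          (SimpleGraph.Embedding.induce ((s : Set (Option (Fin (2*r+3)))))
            (G := cone ((cycleGraph (2*r+3))ᶜ))) := by
        intro hsurj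
        obtain ⟨x, hx⟩ := hsurj v
        apply hv
        have hx' : ((x : (s : Set (Option (Fin (2*r+3))))) : Option (Fin (2*r+3))) = v := hx
        rw [← hx']
        exact Finset.mem_coe.1 x.2
      have hemb := core_main r _
        (SimpleGraph.Embedding.induce ((s : Set (Option (Fin (2*r+3)))))) hns
      obtain ⟨q, hq⟩ := SimpleGraph.exists_isNClique_cliqueNum
        (G := (cone ((cycleGraph (2*r+3))ᶜ)).induce ((s : Set (Option (Fin (2*r+3))))))
      have hwc : ((((cone ((cycleGraph (2*r+3))ᶜ)).induce
          ((s : Set (Option (Fin (2*r+3)))))).cliqueNum : ℕ∞)) ≤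
            ((cone ((cycleGraph (2*r+3))ᶜ)).induce
              ((s : Set (Option (Fin (2*r+3)))))).chromaticNumber := by
        rw [← hq.2]
        exact hq.1.card_le_chromaticNumber
      refine le_trans ?_ (add_le_add hwc (le_refl ((r+1 : ℕ) : ℕ∞)))
      exact_mod_cast hemb
end

section
/- Let G be a neighborhood perfect graph and k ∈ ℕ₀. Then G contains an induced subgraph that is minimal forbidden for Ω_k if and only if G contains an induced subgraph that is minimal forbidden for Υ_k; equivalently, G ∈ Ω_k if and only if G ∈ Υ_k. -/
open SimpleGraph

attribute [local instance] Classical.propDecidable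

set_option linter.unnecessarySeqFocus false

section AuxNbhdPerfect

universe u

variable {V W : Type*}

/-- Iso between induced subgraphs on equal sets. -/
def induceCongr (G : SimpleGraph V) {s t : Set V} (h : s = t) : G.induce s ≃g G.induce t where
  toEquiv := Equiv.setCongr h
  map_rel_iff' := by subst h; exact Iff.rfl

/-- `induce` of `induce` is `induce` of the image. -/
noncomputable def induceInduceIso (G : SimpleGraph V) (s : Set V) (u : Set s) :
    (G.induce s).induce u ≃g G.induce (Subtype.val '' u) where
  toEquiv := Equiv.Set.image Subtype.val u Subtype.val_injective
  map_rel_iff' := Iff.rfl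

lemma iso_degree_eq [Fintype V] [Fintype W] {G1 : SimpleGraph V} {G2 : SimpleGraph W}
    (e : G1 ≃g G2) (v : V) : G2.degree (e v) = G1.degree v := by
  rw [← card_neighborSet_eq_degree, ← card_neighborSet_eq_degree]
  exact Fintype.card_congr (e.mapNeighborSet v).symm

lemma iso_maxDegree_le [Fintype V] [Fintype W] {G1 : SimpleGraph V} {G2 : SimpleGraph W}
    (e : G1 ≃g G2) : G1.maxDegree ≤ G2.maxDegree := by
  apply maxDegree_le_of_forall_degree_le
  intro v
  rw [← iso_degree_eq e v]
  exact G2.degree_le_maxDegree _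

lemma iso_maxDegree_eq [Fintype V] [Fintype W] {G1 : SimpleGraph V} {G2 : SimpleGraph W}
    (e : G1 ≃g G2) : G1.maxDegree = G2.maxDegree :=
  le_antisymm (iso_maxDegree_le e) (iso_maxDegree_le e.symm)

lemma embedding_cliqueNum_le [Fintype V] [Fintype W] {G1 : SimpleGraph V} {G2 : SimpleGraph W}
    (f : G1 ↪g G2) : G1.cliqueNum ≤ G2.cliqueNum := by
  obtain ⟨s, hs⟩ := G1.exists_isNClique_cliqueNum
  have hc : G2.IsClique (s.image f) := by
    intro a ha b hb hab
    simp only [Finset.coe_image, Set.mem_image, Finset.mem_coe] at ha hb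
    obtain ⟨x, hx, rfl⟩ := ha
    obtain ⟨y, hy, rfl⟩ := hb
    exact f.map_adj_iff.mpr (hs.1 hx hy fun h => hab (congrArg f h))
  calc G1.cliqueNum = (s.image f).card := by
        rw [Finset.card_image_of_injective _ f.injective, hs.2]
    _ ≤ G2.cliqueNum := IsClique.card_le_cliqueNum (tc := hc)

lemma iso_cliqueNum_eq [Fintype V] [Fintype W] {G1 : SimpleGraph V} {G2 : SimpleGraph W}
    (e : G1 ≃g G2) : G1.cliqueNum = G2.cliqueNum :=
  le_antisymm (embedding_cliqueNum_le e.toEmbedding) (embedding_cliqueNum_le e.symm.toEmbedding)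

lemma iso_chromaticNumber_eq {G1 : SimpleGraph V} {G2 : SimpleGraph W}
    (e : G1 ≃g G2) : G1.chromaticNumber = G2.chromaticNumber :=
  le_antisymm (chromaticNumber_mono_of_hom e.toEmbedding.toHom)
    (chromaticNumber_mono_of_hom e.symm.toEmbedding.toHom)

/-- The pointwise bound in the definition of `Ω_k`. -/
def ObG (k : ℕ) {V : Type*} [Fintype V] (G : SimpleGraph V) : Prop :=
  G.maxDegree + 1 ≤ G.cliqueNum + k

/-- The pointwise bound in the definition of `Υ_k`. -/
def UbG (k : ℕ) {V : Type*} [Fintype V] (G : SimpleGraph V) : Prop :=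
  (G.maxDegree + 1 : ℕ∞) ≤ G.chromaticNumber + (k : ℕ∞)

lemma ObG_iso {k : ℕ} [Fintype V] [Fintype W] {G1 : SimpleGraph V} {G2 : SimpleGraph W}
    (e : G1 ≃g G2) : ObG k G1 ↔ ObG k G2 := by
  unfold ObG
  rw [iso_maxDegree_eq e, iso_cliqueNum_eq e]

lemma UbG_iso {k : ℕ} [Fintype V] [Fintype W] {G1 : SimpleGraph V} {G2 : SimpleGraph W}
    (e : G1 ≃g G2) : UbG k G1 ↔ UbG k G2 := by
  unfold UbG
  rw [iso_maxDegree_eq e, iso_chromaticNumber_eq e]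

lemma forall_induce_iff {V : Type u} [Fintype V] (G : SimpleGraph V) (s : Finset V)
    (P : ∀ {W : Type u} [Fintype W], SimpleGraph W → Prop)
    (hP : ∀ {W X : Type u} [Fintype W] [Fintype X] {A : SimpleGraph W} {B : SimpleGraph X},
      (A ≃g B) → (P A ↔ P B)) :
    (∀ u : Finset ↥((s : Set V)), u.Nonempty →
        P ((G.induce (s : Set V)).induce (u : Set ↥((s : Set V))))) ↔
      ∀ t : Finset V, (t : Set V) ⊆ (s : Set V) → t.Nonempty → P (G.induce (t : Set V)) := by
  constructor
  · intro H t hts htne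
    classical
    set u : Finset ↥((s : Set V)) := Finset.univ.filter (fun x => (x : V) ∈ t) with hu
    have himg : Subtype.val '' ((u : Set ↥((s : Set V)))) = (t : Set V) := by
      ext x
      constructor
      · rintro ⟨y, hy, rfl⟩
        simp only [hu, Finset.coe_filter, Set.mem_setOf_eq, Finset.mem_univ, true_and] at hy
        exact hy
      · intro hx
        refine ⟨⟨x, hts hx⟩, ?_, rfl⟩
        simp only [hu, Finset.coe_filter, Set.mem_setOf_eq, Finset.mem_univ, true_and]
        exact hx
    have hne : u.Nonempty := by
      obtain ⟨x, hx⟩ := htne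
      exact ⟨⟨x, hts hx⟩, by simp [hu, hx]⟩
    exact (hP ((induceInduceIso G _ _).trans (induceCongr G himg))).mp (H u hne)
  · intro H u hune
    set t : Finset V := u.image Subtype.val with htdef
    have hts : (t : Set V) ⊆ (s : Set V) := by
      intro x hx
      simp only [htdef, Finset.coe_image, Set.mem_image, Finset.mem_coe] at hx
      obtain ⟨y, _, rfl⟩ := hx
      exact y.2
    have htne : t.Nonempty := hune.image _
    have himg : Subtype.val '' ((u : Set ↥((s : Set V)))) = (t : Set V) := by
      simp [htdef]
    exact (hP ((induceInduceIso G _ _).trans (induceCongr G himg))).mpr (H t hts htne)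

lemma omegaMem_induce_iff (k : ℕ) {V : Type u} [Fintype V] (G : SimpleGraph V) (s : Finset V) :
    OmegaMem k (G.induce (s : Set V)) ↔
      ∀ t : Finset V, (t : Set V) ⊆ (s : Set V) → t.Nonempty → ObG k (G.induce (t : Set V)) :=
  forall_induce_iff G s (fun {W} [Fintype W] A => ObG k A) (fun e => ObG_iso e)

lemma upsilonMem_induce_iff (k : ℕ) {V : Type u} [Fintype V] (G : SimpleGraph V) (s : Finset V) :
    UpsilonMem k (G.induce (s : Set V)) ↔
      ∀ t : Finset V, (t : Set V) ⊆ (s : Set V) → t.Nonempty → UbG k (G.induce (t : Set V)) :=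
  forall_induce_iff G s (fun {W} [Fintype W] A => UbG k A) (fun e => UbG_iso e)

lemma omegaMem_def (k : ℕ) {V : Type*} [Fintype V] (G : SimpleGraph V) :
    OmegaMem k G ↔ ∀ t : Finset V, t.Nonempty → ObG k (G.induce (t : Set V)) := Iff.rfl

lemma upsilonMem_def (k : ℕ) {V : Type*} [Fintype V] (G : SimpleGraph V) :
    UpsilonMem k G ↔ ∀ t : Finset V, t.Nonempty → UbG k (G.induce (t : Set V)) := Iff.rfl

lemma card_set_coe [Fintype V] (s : Finset V) : Fintype.card ↥((s : Set V)) = s.card := by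
  rw [Fintype.card_congr (Equiv.subtypeEquivRight (fun x => Finset.mem_coe))]
  exact Fintype.card_coe s

lemma exists_minforb_omega_iff (k : ℕ) {V : Type u} [Fintype V] (G : SimpleGraph V) :
    (∃ s : Finset V, MinForbOmega k (G.induce (s : Set V))) ↔ ¬ OmegaMem k G := by
  constructor
  · rintro ⟨s, hns, -⟩
    rw [omegaMem_induce_iff] at hns
    push_neg at hns
    obtain ⟨t, hts, htne, htb⟩ := hns
    rw [omegaMem_def]
    push_neg
    exact ⟨t, htne, htb⟩
  · intro hG
    have h1 : ∃ t : Finset V, t.Nonempty ∧ ¬ ObG k (G.induce (t : Set V)) := by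
      by_contra hc
      push_neg at hc
      exact hG ((omegaMem_def k G).mpr hc)
    have hex : ∃ n : ℕ, ∃ t : Finset V, t.Nonempty ∧ t.card = n ∧
        ¬ ObG k (G.induce (t : Set V)) :=
      ⟨h1.choose.card, h1.choose, h1.choose_spec.1, rfl, h1.choose_spec.2⟩
    obtain ⟨s, hsne, hscard, hsnb⟩ := Nat.find_spec hex
    have hmin : ∀ t : Finset V, t.Nonempty → t.card < s.card →
        ObG k (G.induce (t : Set V)) := by
      intro t htne htc
      by_contra hb
      exact Nat.find_min hex (hscard ▸ htc) ⟨t, htne, rfl, hb⟩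
    refine ⟨s, ?_, ?_⟩
    · rw [omegaMem_induce_iff]
      push_neg
      exact ⟨s, subset_rfl, hsne, hsnb⟩
    · intro u hu
      rw [omegaMem_induce_iff]
      intro t hts htne
      have hiso := (induceInduceIso (G := G) (s : Set V) ((t : Set ↥((s : Set V))))).trans
        (induceCongr G (by simp : Subtype.val '' ((t : Set ↥((s : Set V)))) =
          ((t.image Subtype.val : Finset V) : Set V)))
      rw [ObG_iso hiso]
      apply hmin
      · exact htne.image _
      · calc (t.image Subtype.val).card = t.card :=
              Finset.card_image_of_injective _ Subtype.val_injective
          _ ≤ u.card := by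
              apply Finset.card_le_card
              intro x hx
              exact Finset.mem_coe.mp (hts (Finset.mem_coe.mpr hx))
          _ < Fintype.card ↥((s : Set V)) := by
              apply Finset.card_lt_card
              refine lt_of_le_of_ne (Finset.subset_univ u) ?_
              simpa using hu
          _ = s.card := card_set_coe s

lemma exists_minforb_upsilon_iff (k : ℕ) {V : Type u} [Fintype V] (G : SimpleGraph V) :
    (∃ s : Finset V, MinForbUpsilon k (G.induce (s : Set V))) ↔ ¬ UpsilonMem k G := by
  constructor
  · rintro ⟨s, hns, -⟩
    rw [upsilonMem_induce_iff] at hns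
    push_neg at hns
    obtain ⟨t, hts, htne, htb⟩ := hns
    rw [upsilonMem_def]
    push_neg
    exact ⟨t, htne, htb⟩
  · intro hG
    have h1 : ∃ t : Finset V, t.Nonempty ∧ ¬ UbG k (G.induce (t : Set V)) := by
      by_contra hc
      push_neg at hc
      exact hG ((upsilonMem_def k G).mpr hc)
    have hex : ∃ n : ℕ, ∃ t : Finset V, t.Nonempty ∧ t.card = n ∧
        ¬ UbG k (G.induce (t : Set V)) :=
      ⟨h1.choose.card, h1.choose, h1.choose_spec.1, rfl, h1.choose_spec.2⟩
    obtain ⟨s, hsne, hscard, hsnb⟩ := Nat.find_spec hex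
    have hmin : ∀ t : Finset V, t.Nonempty → t.card < s.card →
        UbG k (G.induce (t : Set V)) := by
      intro t htne htc
      by_contra hb
      exact Nat.find_min hex (hscard ▸ htc) ⟨t, htne, rfl, hb⟩
    refine ⟨s, ?_, ?_⟩
    · rw [upsilonMem_induce_iff]
      push_neg
      exact ⟨s, subset_rfl, hsne, hsnb⟩
    · intro u hu
      rw [upsilonMem_induce_iff]
      intro t hts htne
      have hiso := (induceInduceIso (G := G) (s : Set V) ((t : Set ↥((s : Set V))))).trans
        (induceCongr G (by simp : Subtype.val '' ((t : Set ↥((s : Set V)))) =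
          ((t.image Subtype.val : Finset V) : Set V)))
      rw [UbG_iso hiso]
      apply hmin
      · exact htne.image _
      · calc (t.image Subtype.val).card = t.card :=
              Finset.card_image_of_injective _ Subtype.val_injective
          _ ≤ u.card := by
              apply Finset.card_le_card
              intro x hx
              exact Finset.mem_coe.mp (hts (Finset.mem_coe.mpr hx))
          _ < Fintype.card ↥((s : Set V)) := by
              apply Finset.card_lt_card
              refine lt_of_le_of_ne (Finset.subset_univ u) ?_
              simpa using hu
          _ = s.card := card_set_coe s

lemma cliqueNum_le_chromaticNumber' [Fintype V] (G : SimpleGraph V) :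
    (G.cliqueNum : ℕ∞) ≤ G.chromaticNumber := by
  obtain ⟨s, hs⟩ := G.exists_isNClique_cliqueNum
  calc (G.cliqueNum : ℕ∞) = s.card := by rw [hs.2]
    _ ≤ G.chromaticNumber := hs.1.card_le_chromaticNumber

lemma colorable_insert (G : SimpleGraph V) (N : Finset V) (a : V)
    {n : ℕ} (h : (G.induce (N : Set V)).Colorable n) :
    (G.induce ((insert a N : Finset V) : Set V)).Colorable (n + 1) := by
  classical
  obtain ⟨C⟩ := h
  refine ⟨Coloring.mk
    (fun x => if hx : (x : V) ∈ N then (C ⟨x, Finset.mem_coe.mpr hx⟩).castSucc else Fin.last n)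
    ?_⟩
  rintro ⟨x, hx⟩ ⟨y, hy⟩ hadj
  have hadj' : G.Adj x y := hadj
  intro hcol
  by_cases h1 : x ∈ N <;> by_cases h2 : y ∈ N
  · simp only [h1, h2, dif_pos] at hcol
    have := Fin.castSucc_injective n hcol
    exact C.valid (by exact hadj') this
  · simp only [h1, h2, dif_pos, dif_neg, not_false_iff] at hcol
    exact (Fin.castSucc_lt_last _).ne hcol
  · simp only [h1, h2, dif_pos, dif_neg, not_false_iff] at hcol
    exact (Fin.castSucc_lt_last _).ne hcol.symm
  · have hx' : x = a := by
      rcases Finset.mem_insert.mp (Finset.mem_coe.mp hx) with h | h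
      · exact h
      · exact absurd h h1
    have hy' : y = a := by
      rcases Finset.mem_insert.mp (Finset.mem_coe.mp hy) with h | h
      · exact h
      · exact absurd h h2
    rw [hx', hy'] at hadj'
    exact G.loopless.irrefl a hadj'

lemma omegaMem_iff_upsilonMem (k : ℕ) {V : Type u} [Fintype V] (G : SimpleGraph V)
    (h : NbhdPerfect G) : OmegaMem k G ↔ UpsilonMem k G := by
  constructor
  · intro hO t ht
    have h1 := hO t ht
    calc ((G.induce (t : Set V)).maxDegree + 1 : ℕ∞)
        = (((G.induce (t : Set V)).maxDegree + 1 : ℕ) : ℕ∞) := by push_cast; ring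
      _ ≤ (((G.induce (t : Set V)).cliqueNum + k : ℕ) : ℕ∞) := Nat.cast_le.mpr h1
      _ = ((G.induce (t : Set V)).cliqueNum : ℕ∞) + (k : ℕ∞) := by push_cast; ring
      _ ≤ (G.induce (t : Set V)).chromaticNumber + (k : ℕ∞) :=
          add_le_add_left (cliqueNum_le_chromaticNumber' _) _
  · intro hU t ht
    obtain ⟨x0, hx0⟩ := ht
    haveI : Nonempty ((t : Set V) : Type _) := ⟨⟨x0, hx0⟩⟩
    set H := G.induce (t : Set V) with hH
    obtain ⟨v, hv⟩ := H.exists_maximal_degree_vertex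
    set N : Finset V := (H.neighborFinset v).image Subtype.val with hNdef
    set t' : Finset V := insert (v : V) N with ht'def
    have hNsub : (N : Set V) ⊆ G.neighborSet (v : V) := by
      intro x hx
      simp only [hNdef, Finset.coe_image, Set.mem_image, Finset.mem_coe,
        mem_neighborFinset] at hx
      obtain ⟨w, hw, rfl⟩ := hx
      exact hw
    have hNt : (N : Set V) ⊆ (t : Set V) := by
      intro x hx
      simp only [hNdef, Finset.coe_image, Set.mem_image, Finset.mem_coe] at hx
      obtain ⟨w, _, rfl⟩ := hx
      exact w.2
    have hvN : (v : V) ∉ N := by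
      intro hmem
      simp only [hNdef, Finset.mem_image, mem_neighborFinset] at hmem
      obtain ⟨w, hw, hval⟩ := hmem
      have : w = v := Subtype.ext hval
      rw [this] at hw
      exact H.loopless.irrefl v hw
    have hvt' : (v : V) ∈ (t' : Set V) := by simp [ht'def]
    have hdeg : H.degree v ≤ (G.induce (t' : Set V)).degree ⟨(v : V), hvt'⟩ := by
      rw [← card_neighborSet_eq_degree, ← card_neighborSet_eq_degree]
      have hmm : ∀ w : ↥(H.neighborSet v), ((w : ↥((t : Set V))) : V) ∈ (t' : Set V) := by
        intro w
        have hmemN : ((w : ↥((t : Set V))) : V) ∈ N := by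
          simp only [hNdef, Finset.mem_image]
          exact ⟨(w : ↥((t : Set V))), (H.mem_neighborFinset v _).mpr w.2, rfl⟩
        simp only [ht'def, Finset.coe_insert, Set.mem_insert_iff]
        exact Or.inr (Finset.mem_coe.mpr hmemN)
      have finj : Function.Injective
          (fun w : ↥(H.neighborSet v) =>
            (⟨⟨((w : ↥((t : Set V))) : V), hmm w⟩, w.2⟩ :
              ↥((G.induce (t' : Set V)).neighborSet ⟨(v : V), hvt'⟩))) := by
        intro a b hab
        apply Subtype.ext
        apply Subtype.ext
        exact congrArg (fun z : ↥((G.induce (t' : Set V)).neighborSet ⟨(v : V), hvt'⟩) =>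
          ((z : ↥((t' : Set V))) : V)) hab
      exact Fintype.card_le_of_injective _ finj
    have hDelta : H.maxDegree ≤ (G.induce (t' : Set V)).maxDegree := by
      rw [hv]
      exact le_trans hdeg ((G.induce (t' : Set V)).degree_le_maxDegree _)
    have hperf : ((G.induce (N : Set V)).cliqueNum : ℕ∞) =
        (G.induce (N : Set V)).chromaticNumber := by
      have hp := h (v : V)
      classical
      set p : Finset ↥(G.neighborSet (v : V)) :=
        Finset.univ.filter (fun x => (x : V) ∈ N) with hpdef
      have himg : Subtype.val '' ((p : Set ↥(G.neighborSet (v : V)))) = (N : Set V) := by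
        ext x
        constructor
        · rintro ⟨y, hy, rfl⟩
          simp only [hpdef, Finset.coe_filter, Set.mem_setOf_eq, Finset.mem_univ,
            true_and] at hy
          exact Finset.mem_coe.mpr hy
        · intro hx
          refine ⟨⟨x, hNsub hx⟩, ?_, rfl⟩
          simp only [hpdef, Finset.coe_filter, Set.mem_setOf_eq, Finset.mem_univ, true_and]
          exact Finset.mem_coe.mp hx
      have e := (induceInduceIso G (G.neighborSet (v : V)) _).trans (induceCongr G himg)
      have := hp p
      rwa [iso_cliqueNum_eq e, iso_chromaticNumber_eq e] at this
    have hNfin : (G.induce (N : Set V)).chromaticNumber ≠ ⊤ := by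
      rw [chromaticNumber_ne_top_iff_exists]
      exact ⟨_, (G.induce (N : Set V)).colorable_of_fintype⟩
    set n := ((G.induce (N : Set V)).chromaticNumber).toNat with hn
    have hcoe : ((n : ℕ∞)) = (G.induce (N : Set V)).chromaticNumber := ENat.coe_toNat hNfin
    have hcol : (G.induce (N : Set V)).Colorable n := by
      rw [← chromaticNumber_le_iff_colorable, hcoe]
    have hcol' : (G.induce (t' : Set V)).Colorable (n + 1) := colorable_insert G N _ hcol
    have homega : (G.induce (N : Set V)).cliqueNum + 1 ≤ H.cliqueNum := by
      obtain ⟨c, hc⟩ := (G.induce (N : Set V)).exists_isNClique_cliqueNum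
      classical
      set g : ↥((N : Set V)) → ↥((t : Set V)) := fun x => ⟨(x : V), hNt x.2⟩ with hgdef
      have hginj : Function.Injective g := by
        intro a b hab
        exact Subtype.ext (congrArg (fun z : ↥((t : Set V)) => (z : V)) hab)
      set c' : Finset ↥((t : Set V)) := insert v (c.image g) with hc'def
      have hvimg : v ∉ c.image g := by
        intro hmem
        simp only [Finset.mem_image] at hmem
        obtain ⟨x, _, hgx⟩ := hmem
        apply hvN
        have : ((x : V)) = (v : V) := congrArg Subtype.val hgx
        rw [← this]
        exact Finset.mem_coe.mp x.2
      have hadjv : ∀ x : ↥((N : Set V)), H.Adj v (g x) := by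
        intro x
        have hxN : (x : V) ∈ N := Finset.mem_coe.mp x.2
        simp only [hNdef, Finset.mem_image, mem_neighborFinset] at hxN
        obtain ⟨w, hw, hval⟩ := hxN
        have : g x = w := Subtype.ext hval.symm
        rw [this]
        exact hw
      have hclique : H.IsClique (c' : Set ↥((t : Set V))) := by
        intro a ha b hb hab
        simp only [hc'def, Finset.coe_insert, Set.mem_insert_iff, Finset.coe_image,
          Set.mem_image, Finset.mem_coe] at ha hb
        rcases ha with rfl | ⟨x, hx, rfl⟩
        · rcases hb with rfl | ⟨y, hy, rfl⟩
          · exact absurd rfl hab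
          · exact hadjv y
        · rcases hb with rfl | ⟨y, hy, rfl⟩
          · exact (hadjv x).symm
          · have hxy : x ≠ y := fun hxy => hab (by rw [hxy])
            exact hc.1 (Finset.mem_coe.mpr hx) (Finset.mem_coe.mpr hy) hxy
      have hcard : c'.card = (G.induce (N : Set V)).cliqueNum + 1 := by
        rw [hc'def, Finset.card_insert_of_notMem hvimg,
          Finset.card_image_of_injective _ hginj, hc.2]
      calc (G.induce (N : Set V)).cliqueNum + 1 = c'.card := hcard.symm
        _ ≤ H.cliqueNum := IsClique.card_le_cliqueNum (tc := hclique)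
    have hU' := hU t' (Finset.insert_nonempty _ _)
    have final : (H.maxDegree : ℕ∞) + 1 ≤ (H.cliqueNum : ℕ∞) + (k : ℕ∞) := by
      calc (H.maxDegree : ℕ∞) + 1
          ≤ ((G.induce (t' : Set V)).maxDegree : ℕ∞) + 1 :=
            add_le_add_left (Nat.cast_le.mpr hDelta) 1
        _ ≤ (G.induce (t' : Set V)).chromaticNumber + (k : ℕ∞) := hU'
        _ ≤ ((n + 1 : ℕ) : ℕ∞) + (k : ℕ∞) :=
            add_le_add_left hcol'.chromaticNumber_le _
        _ = ((G.induce (N : Set V)).chromaticNumber + 1) + (k : ℕ∞) := by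
            rw [← hcoe]; push_cast; ring
        _ = (((G.induce (N : Set V)).cliqueNum : ℕ∞) + 1) + (k : ℕ∞) := by rw [hperf]
        _ = (((G.induce (N : Set V)).cliqueNum + 1 : ℕ) : ℕ∞) + (k : ℕ∞) := by
            push_cast; ring
        _ ≤ (H.cliqueNum : ℕ∞) + (k : ℕ∞) := add_le_add_left (Nat.cast_le.mpr homega) _
    exact_mod_cast final

end AuxNbhdPerfect

theorem nbhdPerfect_forb_iff (k : ℕ) {V : Type*} [Fintype V]
    (G : SimpleGraph V) (h : NbhdPerfect G) :
    ((∃ s : Finset V, MinForbOmega k (G.induce (s : Set V))) ↔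
        (∃ s : Finset V, MinForbUpsilon k (G.induce (s : Set V)))) ∧
      (OmegaMem k G ↔ UpsilonMem k G) := by
  have hmem := omegaMem_iff_upsilonMem k G h
  refine ⟨?_, hmem⟩
  rw [exists_minforb_omega_iff, exists_minforb_upsilon_iff]
  exact not_congr hmem
end
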